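/- Consider a Markov chain with n states whose transition matrix P has rational entries with denominators dividing a positive integer M, and which is irreducible (for all states i, j there exists s ≥ 1 with (P^s)_{ij} > 0). Let k ≤ n be the number of states having at least two possible successors (i.e., indices i such that P_{ij} > 0 for at least two distinct j). If π ∈ ℚⁿ is the invariant measure of the chain, i.e., π_j ≥ 0 for all j, Σ_j π_j = 1, and Σ_i π_i P_{ij} = π_j for all j, then the least common multiple of the denominators of the rational numbers π_1, …, π_n (written in lowest terms) is at most n · M^{min(k, n−1)}. -/

import Mathlib

open Classical
open Matrix Finset



lemma sub_det : ∀ (m : ℕ) (Q : Matrix (Fin m) (Fin m) ℚ),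
    (∀ i j, 0 ≤ Q i j) → (∀ i, ∑ j, Q i j ≤ 1) →
    0 ≤ (1 - Q).det ∧ (1 - Q).det ≤ 1 := by
  intro m
  induction m with
  | zero => intro Q _ _; simp [Matrix.det_isEmpty]
  | succ m ih =>
    intro Q hnn hrs
    set L := Fin.last m with hL
    have hq1 : Q L L ≤ 1 :=
      le_trans (Finset.single_le_sum (f := fun j => Q L j) (fun j _ => hnn _ j)
        (Finset.mem_univ L)) (hrs L)
    rcases eq_or_lt_of_le hq1 with hq | hq
    · -- row L of 1 - Q is zero
      have hzero : ∀ j, Q L j = if j = L then 1 else 0 := by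
        intro j
        by_cases hj : j = L
        · simp [hj, hq]
        · simp only [hj, if_false]
          have h1 : ∑ j, Q L j = Q L L + ∑ j ∈ Finset.univ.erase L, Q L j := by
            rw [Finset.add_sum_erase _ _ (Finset.mem_univ L)]
          have h2 : (0:ℚ) ≤ ∑ j ∈ Finset.univ.erase L, Q L j :=
            Finset.sum_nonneg fun l _ => hnn _ _
          have h3 : ∑ j ∈ Finset.univ.erase L, Q L j ≤ 0 := by
            have := hrs L
            rw [h1, hq] at this; linarith
          have h4 : ∑ j ∈ Finset.univ.erase L, Q L j = 0 := le_antisymm h3 h2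
          have := (Finset.sum_eq_zero_iff_of_nonneg fun l _ => hnn L l).mp h4 j
            (Finset.mem_erase.mpr ⟨hj, Finset.mem_univ j⟩)
          exact this
      have hrow : ∀ j, (1 - Q) L j = 0 := by
        intro j
        simp only [Matrix.sub_apply, Matrix.one_apply, hzero j]
        by_cases hj : j = L
        · simp [hj]
        · simp [hj, Ne.symm (fun h => hj h.symm)]
          intro h; exact absurd h.symm hj
      have hdet : (1 - Q).det = 0 := Matrix.det_eq_zero_of_row_eq_zero L hrow
      constructor <;> rw [hdet] <;> norm_num
    · -- pivot case
      set p : ℚ := 1 - Q L L with hp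
      have hppos : 0 < p := by simp [hp]; linarith
      have hple : p ≤ 1 := by have := hnn L L; simp [hp]; linarith
      -- blocks
      set A₀ : Matrix (Fin m) (Fin m) ℚ := fun i j => (1 - Q) i.castSucc j.castSucc with hA
      set B₀ : Matrix (Fin m) (Fin 1) ℚ := fun i _ => (1 - Q) i.castSucc L with hB
      set C₀ : Matrix (Fin 1) (Fin m) ℚ := fun _ j => (1 - Q) L j.castSucc with hC
      set D₀ : Matrix (Fin 1) (Fin 1) ℚ := fun _ _ => p with hD
      have hre : (1 - Q).det = (Matrix.fromBlocks A₀ B₀ C₀ D₀).det := by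
        rw [← Matrix.det_submatrix_equiv_self (finSumFinEquiv (m := m) (n := 1)) (1 - Q)]
        congr 1
        ext i j
        cases i with
        | inl i => cases j with
          | inl j => simp [Matrix.fromBlocks, hA, Fin.castSucc]
          | inr j =>
            have : finSumFinEquiv (Sum.inr j) = L := by
              apply Fin.ext; simp [finSumFinEquiv, hL]
            simp [Matrix.fromBlocks, hB, this, Fin.castSucc]
        | inr i => cases j with
          | inl j =>
            have : finSumFinEquiv (Sum.inr i) = L := by
              apply Fin.ext; simp [finSumFinEquiv, hL]
            simp [Matrix.fromBlocks, hC, this, Fin.castSucc]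
          | inr j =>
            have hi : finSumFinEquiv (Sum.inr i) = L := by
              apply Fin.ext; simp [finSumFinEquiv, hL]
            have hj : finSumFinEquiv (Sum.inr j) = L := by
              apply Fin.ext; simp [finSumFinEquiv, hL]
            simp [Matrix.fromBlocks, hD, hi, hj, hp]
      -- invertibility of D₀
      have hDinv : D₀ * (Matrix.of (fun _ _ => p⁻¹) : Matrix (Fin 1) (Fin 1) ℚ) = 1 := by
        ext i j
        have hi : i = 0 := Subsingleton.elim i 0
        have hj : j = 0 := Subsingleton.elim j 0
        subst hi; subst hj
        rw [Matrix.mul_apply]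
        simp [Matrix.mul_apply, hD, Matrix.one_apply, mul_inv_cancel₀ (ne_of_gt hppos)]
      haveI : Invertible D₀ := invertibleOfRightInverse _ _ hDinv
      have hinvOf : (⅟ D₀ : Matrix (Fin 1) (Fin 1) ℚ) = Matrix.of (fun _ _ => p⁻¹) := by
        exact invOf_eq_right_inv hDinv
      have hdetD : D₀.det = p := by rw [Matrix.det_fin_one]
      set Q' : Matrix (Fin m) (Fin m) ℚ :=
        fun i j => Q i.castSucc j.castSucc + Q i.castSucc L * Q L j.castSucc / p with hQ'
      have hschur : A₀ - B₀ * ⅟ D₀ * C₀ = 1 - Q' := by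
        ext i j
        simp only [Matrix.sub_apply, hinvOf, Matrix.mul_apply, Fin.sum_univ_one]
        have hcs1 : i.castSucc ≠ L := (Fin.castSucc_lt_last i).ne
        have hcs2 : L ≠ j.castSucc := (Fin.castSucc_lt_last j).ne'
        simp [hA, hB, hC, hQ', Matrix.sub_apply, Matrix.one_apply,
          Fin.castSucc_inj, hcs1, hcs2]
        ring
      have hdet : (1 - Q).det = p * (1 - Q').det := by
        rw [hre, Matrix.det_fromBlocks₂₂, hdetD, hschur]
      -- Q' is substochastic
      have hnn' : ∀ i j, 0 ≤ Q' i j := fun i j =>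
        add_nonneg (hnn _ _) (div_nonneg (mul_nonneg (hnn _ _) (hnn _ _)) (le_of_lt hppos))
      have hrsL : ∑ j : Fin m, Q L j.castSucc ≤ p := by
        have := hrs L
        rw [Fin.sum_univ_castSucc (f := fun j => Q L j)] at this
        simp [hp]; linarith
      have hrs' : ∀ i, ∑ j, Q' i j ≤ 1 := by
        intro i
        have hsum : ∑ j, Q' i j =
            (∑ j : Fin m, Q i.castSucc j.castSucc)
              + Q i.castSucc L * (∑ j : Fin m, Q L j.castSucc) / p := by
          rw [hQ']
          rw [Finset.sum_add_distrib]
          congr 1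
          rw [Finset.mul_sum, Finset.sum_div]
        have h1 : ∑ j : Fin m, Q i.castSucc j.castSucc ≤ 1 - Q i.castSucc L := by
          have := hrs i.castSucc
          rw [Fin.sum_univ_castSucc (f := fun j => Q i.castSucc j)] at this
          linarith
        have h2 : Q i.castSucc L * (∑ j : Fin m, Q L j.castSucc) / p ≤ Q i.castSucc L := by
          rw [div_le_iff₀ hppos]
          calc Q i.castSucc L * (∑ j : Fin m, Q L j.castSucc)
              ≤ Q i.castSucc L * p := by
                exact mul_le_mul_of_nonneg_left hrsL (hnn _ _)
            _ = Q i.castSucc L * p := rfl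
        rw [hsum]; linarith
      obtain ⟨h0, h1⟩ := ih Q' hnn' hrs'
      constructor
      · rw [hdet]; exact mul_nonneg (le_of_lt hppos) h0
      · rw [hdet]
        calc p * (1 - Q').det ≤ p * 1 := mul_le_mul_of_nonneg_left h1 (le_of_lt hppos)
          _ ≤ 1 := by linarith


section helpers
variable {n : ℕ} (P : Matrix (Fin n) (Fin n) ℚ)

lemma pownn (hPnn : ∀ i j, 0 ≤ P i j) : ∀ (s : ℕ) (i j), 0 ≤ (P ^ s) i j := by
  intro s
  induction s with
  | zero => intro i j; simp [Matrix.one_apply]; split <;> norm_num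
  | succ s ih =>
    intro i j
    rw [pow_succ, Matrix.mul_apply]
    exact Finset.sum_nonneg fun l _ => mul_nonneg (ih i l) (hPnn l j)

lemma powrs (hPsum : ∀ i, ∑ j, P i j = 1) : ∀ (s : ℕ) (i), ∑ j, (P ^ s) i j = 1 := by
  intro s
  induction s with
  | zero => intro i; simp [Matrix.one_apply]
  | succ s ih =>
    intro i
    have : ∀ j, (P ^ (s+1)) i j = ∑ l, (P ^ s) i l * P l j := by
      intro j; rw [pow_succ, Matrix.mul_apply]
    rw [Finset.sum_congr rfl fun j _ => this j, Finset.sum_comm]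
    calc ∑ l, ∑ j, (P ^ s) i l * P l j = ∑ l, (P ^ s) i l * ∑ j, P l j := by
          exact Finset.sum_congr rfl fun l _ => (Finset.mul_sum _ _ _).symm
      _ = ∑ l, (P ^ s) i l := by
          exact Finset.sum_congr rfl fun l _ => by rw [hPsum l, mul_one]
      _ = 1 := ih i

lemma statpow (x : Fin n → ℚ) (hx : ∀ j, ∑ i, x i * P i j = x j) :
    ∀ (s : ℕ) (j), ∑ i, x i * (P ^ s) i j = x j := by
  intro s
  induction s with
  | zero => intro j; simp [Matrix.one_apply]
  | succ s ih =>
    intro j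
    have : ∀ i, x i * (P ^ (s+1)) i j = ∑ l, x i * (P ^ s) i l * P l j := by
      intro i
      rw [pow_succ, Matrix.mul_apply, Finset.mul_sum]
      exact Finset.sum_congr rfl fun l _ => (mul_assoc _ _ _).symm
    rw [Finset.sum_congr rfl fun i _ => this i, Finset.sum_comm]
    have : ∀ l, ∑ i, x i * (P ^ s) i l * P l j = x l * P l j := by
      intro l; rw [← Finset.sum_mul, ih l]
    rw [Finset.sum_congr rfl fun l _ => this l, hx j]

lemma mvecpow (r : Fin n → ℚ) (hr : ∀ j, r j = ∑ l, P j l * r l) :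
    ∀ (s : ℕ) (j), r j = ∑ l, (P ^ s) j l * r l := by
  intro s
  induction s with
  | zero => intro j; simp [Matrix.one_apply]
  | succ s ih =>
    intro j
    have : ∀ l, (P ^ (s+1)) j l * r l = ∑ i, (P ^ s) j i * P i l * r l := by
      intro l; rw [pow_succ, Matrix.mul_apply, Finset.sum_mul]
    rw [Finset.sum_congr rfl fun l _ => this l, Finset.sum_comm]
    have : ∀ i, ∑ l, (P ^ s) j i * P i l * r l = (P ^ s) j i * r i := by
      intro i
      calc ∑ l, (P ^ s) j i * P i l * r l = (P ^ s) j i * ∑ l, P i l * r l := by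
            rw [Finset.mul_sum]; exact Finset.sum_congr rfl fun l _ => by ring
        _ = (P ^ s) j i * r i := by rw [← hr i]
    rw [Finset.sum_congr rfl fun i _ => this i]
    exact ih j

variable (hn : 0 < n)
  (hPnn : ∀ i j, 0 ≤ P i j)
  (hPsum : ∀ i, ∑ j, P i j = 1)
  (hirr : ∀ i j, ∃ s : ℕ, 1 ≤ s ∧ 0 < (P ^ s) i j)
  (π : Fin n → ℚ)
  (hπnn : ∀ j, 0 ≤ π j)
  (hπsum : ∑ j, π j = 1)
  (hπstat : ∀ j, ∑ i, π i * P i j = π j)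

include hPnn hirr π hπnn hπsum hπstat in
lemma pipos : ∀ j, 0 < π j := by
  have h1 : ∃ i1, 0 < π i1 := by
    by_contra h
    push_neg at h
    have : ∑ j, π j ≤ 0 := Finset.sum_nonpos fun j _ => h j
    rw [hπsum] at this; linarith
  obtain ⟨i1, hi1⟩ := h1
  intro j
  obtain ⟨s, _, hs2⟩ := hirr i1 j
  have hst := statpow P π hπstat s j
  have hle : π i1 * (P ^ s) i1 j ≤ ∑ i, π i * (P ^ s) i j :=
    Finset.single_le_sum (f := fun i => π i * (P ^ s) i j)
      (fun i _ => mul_nonneg (hπnn i) (pownn P hPnn s i j)) (Finset.mem_univ i1)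
  rw [hst] at hle
  exact lt_of_lt_of_le (mul_pos hi1 hs2) hle

include hn hPnn hirr hπnn hπsum hπstat in
lemma uniq (x : Fin n → ℚ) (hx : ∀ j, ∑ i, x i * P i j = x j) :
    ∀ j, x j = (∑ i, x i) * π j := by
  have hπpos := pipos P hPnn hirr π hπnn hπsum hπstat
  obtain ⟨i0, -, hi0⟩ := Finset.exists_min_image Finset.univ (fun i => x i / π i)
    ⟨⟨0, hn⟩, Finset.mem_univ _⟩
  set c := x i0 / π i0 with hc
  set z : Fin n → ℚ := fun i => x i - c * π i with hzdef
  have hznn : ∀ i, 0 ≤ z i := by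
    intro i
    have h := hi0 i (Finset.mem_univ i)
    rw [le_div_iff₀ (hπpos i)] at h
    simp only [hzdef]
    linarith
  have hz0 : z i0 = 0 := by
    simp [hzdef, hc, div_mul_cancel₀ _ (ne_of_gt (hπpos i0))]
  have hzstat : ∀ j, ∑ i, z i * P i j = z j := by
    intro j
    have : ∀ i, z i * P i j = x i * P i j - c * (π i * P i j) := by
      intro i; simp only [hzdef]; ring
    rw [Finset.sum_congr rfl fun i _ => this i, Finset.sum_sub_distrib, ← Finset.mul_sum,
      hx j, hπstat j]
  have hzzero : ∀ i, z i = 0 := by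
    by_contra h
    push_neg at h
    obtain ⟨i1, hi1⟩ := h
    have hi1pos : 0 < z i1 := lt_of_le_of_ne (hznn i1) (Ne.symm hi1)
    obtain ⟨s, _, hs2⟩ := hirr i1 i0
    have hst := statpow P z hzstat s i0
    have hle : z i1 * (P ^ s) i1 i0 ≤ ∑ i, z i * (P ^ s) i i0 :=
      Finset.single_le_sum (f := fun i => z i * (P ^ s) i i0)
        (fun i _ => mul_nonneg (hznn i) (pownn P hPnn s i i0)) (Finset.mem_univ i1)
    rw [hst, hz0] at hle
    exact absurd hle (not_le.mpr (mul_pos hi1pos hs2))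
  have hxc : ∀ i, x i = c * π i := by
    intro i; have := hzzero i; simp [hzdef] at this; linarith
  have hsum : ∑ i, x i = c := by
    rw [Finset.sum_congr rfl fun i _ => hxc i, ← Finset.mul_sum, hπsum, mul_one]
  intro j; rw [hsum, hxc j]

include hPnn hPsum hirr in
lemma constfn (r : Fin n → ℚ) (hr : ∀ j, r j = ∑ l, P j l * r l) :
    ∀ j j', r j = r j' := by
  suffices h : ∀ j0 j, (∀ i ∈ Finset.univ, r j0 ≤ r i) → r j = r j0 by
    intro j j'
    haveI : Nonempty (Fin n) := ⟨j⟩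
    obtain ⟨j0, -, hj0⟩ := Finset.exists_min_image Finset.univ r Finset.univ_nonempty
    rw [h j0 j hj0, h j0 j' hj0]
  intro j0 j hj0
  obtain ⟨s, _, hs2⟩ := hirr j0 j
  have hst := mvecpow P r hr s j0
  by_contra hne
  have hlt : r j0 < r j := lt_of_le_of_ne (hj0 j (Finset.mem_univ j)) (Ne.symm hne)
  have hstrict : ∑ l, (P ^ s) j0 l * r j0 < ∑ l, (P ^ s) j0 l * r l := by
    apply Finset.sum_lt_sum
    · intro l _
      exact mul_le_mul_of_nonneg_left (hj0 l (Finset.mem_univ l)) (pownn P hPnn s j0 l)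
    · exact ⟨j, Finset.mem_univ j, by
        exact mul_lt_mul_of_pos_left hlt hs2⟩
  rw [← Finset.sum_mul, powrs P hPsum s j0, one_mul, ← hst] at hstrict
  exact lt_irrefl _ hstrict
end helpers


lemma qint (q : ℚ) (N : ℕ) (h : q.den ∣ N) : ∃ z : ℤ, (z : ℚ) = q * N := by
  obtain ⟨c, hc⟩ := h
  refine ⟨q.num * c, ?_⟩
  rw [hc]
  push_cast
  rw [← Rat.mul_den_eq_num]
  ring


section main
variable {n M : ℕ} (hn : 0 < n) (hM : 1 ≤ M)
    (P : Matrix (Fin n) (Fin n) ℚ)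
    (hPnn : ∀ i j, 0 ≤ P i j)
    (hPsum : ∀ i, ∑ j, P i j = 1)
    (hden : ∀ i j, (P i j).den ∣ M)

-- deterministic rows have 0/1 entries
include hPnn hPsum in
lemma detrow (x : Fin n) (hx : ¬ 1 < (Finset.univ.filter fun j => 0 < P x j).card) :
    ∀ c, P x c = 0 ∨ P x c = 1 := by
  intro c
  by_cases h0 : P x c = 0
  · exact Or.inl h0
  · right
    have hpos : 0 < P x c := lt_of_le_of_ne (hPnn x c) (Ne.symm h0)
    have hcard : (Finset.univ.filter fun j => 0 < P x j).card ≤ 1 := not_lt.mp hx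
    have huniq := Finset.card_le_one.mp hcard
    have hmem : c ∈ Finset.univ.filter fun j => 0 < P x j := by
      simp [Finset.mem_filter, hpos]
    have hsum : ∑ j, P x j = ∑ j ∈ Finset.univ.filter (fun j => 0 < P x j), P x j := by
      symm
      apply Finset.sum_subset (Finset.filter_subset _ _)
      intro j _ hj
      simp only [Finset.mem_filter, Finset.mem_univ, true_and, not_lt] at hj
      exact le_antisymm hj (hPnn x j)
    have hsingle : Finset.univ.filter (fun j => 0 < P x j) = {c} := by
      apply Finset.eq_singleton_iff_unique_mem.mpr
      exact ⟨hmem, fun b hb => huniq b hb c hmem⟩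
    rw [hsingle, Finset.sum_singleton] at hsum
    rw [← hsum, hPsum x]
end main
/-- Bound on the common denominator of the invariant measure of an irreducible Markov chain
with `n` states whose transition probabilities are rational with denominators dividing `M`:
if `k` is the number of states with at least two possible successors, then the least common
multiple of the denominators of the entries of the invariant measure is at most
`n * M ^ min k (n-1)`. -/
theorem stmt10 {n M : ℕ} (hn : 0 < n) (hM : 1 ≤ M)
    (P : Matrix (Fin n) (Fin n) ℚ)
    (hPnn : ∀ i j, 0 ≤ P i j)
    (hPsum : ∀ i, ∑ j, P i j = 1)
    (hden : ∀ i j, (P i j).den ∣ M)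
    (hirr : ∀ i j, ∃ s : ℕ, 1 ≤ s ∧ 0 < (P ^ s) i j)
    (π : Fin n → ℚ)
    (hπnn : ∀ j, 0 ≤ π j)
    (hπsum : ∑ j, π j = 1)
    (hπstat : ∀ j, ∑ i, π i * P i j = π j) :
    Finset.univ.lcm (fun j => (π j).den) ≤
      n * M ^ (min ((Finset.univ.filter fun i =>
          1 < (Finset.univ.filter fun j => 0 < P i j).card).card) (n - 1)) := by
  classical
  set k := (Finset.univ.filter fun i =>
      1 < (Finset.univ.filter fun j => 0 < P i j).card).card with hk
  set m := min k (n - 1) with hm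
  set A : Matrix (Fin n) (Fin n) ℚ := 1 - Pᵀ with hA
  have hAapp : ∀ r c, A r c = (if r = c then (1:ℚ) else 0) - P c r := by
    intro r c
    simp [hA, Matrix.sub_apply, Matrix.one_apply, Matrix.transpose_apply]
  -- determinant of A vanishes
  have hAdet : A.det = 0 := by
    have h2 : (1 - P).det = 0 := by
      rw [← Matrix.exists_mulVec_eq_zero_iff]
      refine ⟨fun _ => 1, ?_, ?_⟩
      · intro h
        have := congrFun h ⟨0, hn⟩
        norm_num at this
      · funext i
        simp only [Matrix.mulVec, dotProduct, Matrix.sub_apply, Matrix.one_apply, mul_one]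
        rw [Finset.sum_sub_distrib, hPsum i]
        simp
    have hAT : A = (1 - P)ᵀ := by
      rw [Matrix.transpose_sub, Matrix.transpose_one]
    rw [hAT, Matrix.det_transpose, h2]
  set adj := A.adjugate with hadj
  -- rows of the adjugate are constant
  have hrowsc : ∀ i j j', adj i j = adj i j' := by
    intro i
    apply constfn P hPnn hPsum hirr (fun l => adj i l)
    intro j
    have h0 : (adj * A) i j = 0 := by
      rw [Matrix.adjugate_mul, hAdet]; simp
    rw [Matrix.mul_apply] at h0
    have he : ∀ l, adj i l * A l j
        = (if l = j then adj i l else 0) - P j l * adj i l := by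
      intro l
      rw [hAapp l j]
      split <;> ring
    rw [Finset.sum_congr rfl fun l _ => he l, Finset.sum_sub_distrib,
      Finset.sum_ite_eq' Finset.univ j (fun l => adj i l)] at h0
    simp only [Finset.mem_univ, if_true] at h0
    linarith [h0]
  set d : Fin n → ℚ := fun i => adj i i with hd
  -- d is stationary
  have hdstat : ∀ j, ∑ l, d l * P l j = d j := by
    intro j
    have h0 : (A * adj) j j = 0 := by
      rw [Matrix.mul_adjugate, hAdet]; simp
    rw [Matrix.mul_apply] at h0
    have he : ∀ l, A j l * adj l j
        = (if l = j then d j else 0) - d l * P l j := by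
      intro l
      rw [hAapp j l]
      have h1 : adj l j = d l := hrowsc l j l
      rw [h1]
      by_cases hlj : l = j
      · subst hlj
        simp only [if_pos rfl, if_true, eq_self_iff_true]
        ring
      · simp only [if_neg hlj, if_neg (Ne.symm hlj)]
        ring
    rw [Finset.sum_congr rfl fun l _ => he l, Finset.sum_sub_distrib,
      Finset.sum_ite_eq' Finset.univ j (fun _ => d j)] at h0
    simp only [Finset.mem_univ, if_true] at h0
    linarith [h0]
  -- d i = det of the updateRow matrix
  have hdform : ∀ i, d i = (A.updateRow i (Pi.single i 1)).det := by
    intro i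
    rw [hd]
    exact Matrix.adjugate_apply A i i
  -- bounds on d
  have hdbound : ∀ i, 0 ≤ d i ∧ d i ≤ 1 := by
    intro i
    set Q : Matrix (Fin n) (Fin n) ℚ :=
      Matrix.of (fun r c => if c = i then (0:ℚ) else P r c) with hQ
    have hup : A.updateRow i (Pi.single i 1) = 1 - Qᵀ := by
      ext r c
      by_cases hr : r = i
      · subst hr
        rw [Matrix.updateRow_self]
        simp [Pi.single_apply, hQ, Matrix.sub_apply, Matrix.one_apply,
          Matrix.transpose_apply, eq_comm]
      · rw [Matrix.updateRow_ne hr]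
        simp only [hAapp, hQ, Matrix.sub_apply, Matrix.one_apply,
          Matrix.transpose_apply, Matrix.of_apply]
        by_cases hc : r = i
        · exact absurd hc hr
        · simp [hr]
    have hdet : (1 - Qᵀ).det = (1 - Q).det := by
      rw [← Matrix.det_transpose (1 - Q), Matrix.transpose_sub, Matrix.transpose_one]
    have hQnn : ∀ r c, 0 ≤ Q r c := by
      intro r c
      simp only [hQ, Matrix.of_apply]
      split
      · exact le_refl 0
      · exact hPnn r c
    have hQrs : ∀ r, ∑ c, Q r c ≤ 1 := by
      intro r
      rw [← hPsum r]
      apply Finset.sum_le_sum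
      intro c _
      simp only [hQ, Matrix.of_apply]
      split
      · exact hPnn r c
      · exact le_refl _
    have := sub_det n Q hQnn hQrs
    rw [hdform i, hup, hdet]
    exact this
  -- integrality of d * M^m
  have hPint : ∀ r c, ∃ z : ℤ, (z:ℚ) = P r c * M := fun r c => qint _ M (hden r c)
  have hdint : ∀ i, ∃ z : ℤ, (z : ℚ) = d i * (M:ℚ)^m := by
    intro i
    set R : Subring ℚ := (Int.castRingHom ℚ).range with hR
    set B := A.updateRow i (Pi.single i 1) with hB
    suffices h : B.det * (M:ℚ)^m ∈ R by
      obtain ⟨z, hz⟩ := h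
      exact ⟨z, by rw [hdform i]; exact hz⟩
    rw [Matrix.det_apply', Finset.sum_mul]
    apply Subring.sum_mem
    intro σ _
    set T := Finset.univ.filter
      (fun x => (1 < (Finset.univ.filter fun j => 0 < P x j).card) ∧ σ x ≠ i) with hT
    have hTk : T.card ≤ k := by
      rw [hk]
      apply Finset.card_le_card
      intro x hx
      simp only [hT, Finset.mem_filter] at hx ⊢
      exact ⟨hx.1, hx.2.1⟩
    have hTn : T.card ≤ n - 1 := by
      have hsub : T ⊆ Finset.univ.erase (σ⁻¹ i) := by
        intro x hx
        simp only [hT, Finset.mem_filter] at hx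
        refine Finset.mem_erase.mpr ⟨?_, Finset.mem_univ x⟩
        intro hxe
        apply hx.2.2
        rw [hxe]
        exact Equiv.apply_symm_apply σ i
      calc T.card ≤ (Finset.univ.erase (σ⁻¹ i)).card := Finset.card_le_card hsub
        _ = n - 1 := by
          rw [Finset.card_erase_of_mem (Finset.mem_univ _), Finset.card_univ,
            Fintype.card_fin]
    have hTm : T.card ≤ m := by rw [hm]; exact le_min hTk hTn
    have hfac1 : ∀ x ∈ T, B (σ x) x * M ∈ R := by
      intro x hx
      simp only [hT, Finset.mem_filter] at hx
      have hne : σ x ≠ i := hx.2.2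
      have hBA : B (σ x) x = A (σ x) x := by rw [hB, Matrix.updateRow_ne hne]
      rw [hBA, hAapp, sub_mul]
      apply Subring.sub_mem
      · exact ⟨(if σ x = x then 1 else 0 : ℤ) * M, by simp only [eq_intCast]; push_cast; split <;> ring⟩
      · obtain ⟨z, hz⟩ := hPint x (σ x)
        exact ⟨z, hz⟩
    have hfac2 : ∀ x ∈ Tᶜ, B (σ x) x ∈ R := by
      intro x hx
      simp only [hT, Finset.mem_compl, Finset.mem_filter, Finset.mem_univ, true_and,
        not_and, ne_eq, not_not] at hx
      by_cases hσ : σ x = i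
      · have hval : B (σ x) x = if x = i then 1 else 0 := by
          rw [hB, hσ, Matrix.updateRow_self]
          simp [Pi.single_apply]
        rw [hval]
        exact ⟨(if x = i then 1 else 0 : ℤ), by simp only [eq_intCast]; push_cast; split <;> rfl⟩
      · have hnd : ¬ 1 < (Finset.univ.filter fun j => 0 < P x j).card := fun hc => hσ (hx hc)
        have hval : B (σ x) x = (if σ x = x then 1 else 0) - P x (σ x) := by
          rw [hB, Matrix.updateRow_ne hσ, hAapp]
        rw [hval]
        rcases detrow P hPnn hPsum x hnd (σ x) with h | h <;> rw [h]
        · exact ⟨(if σ x = x then 1 else 0 : ℤ), by simp only [eq_intCast]; push_cast; split <;> ring⟩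
        · exact ⟨(if σ x = x then 1 else 0 : ℤ) - 1, by simp only [eq_intCast]; push_cast; split <;> ring⟩
    have hMmem : (M:ℚ)^(m - T.card) ∈ R := ⟨(M:ℤ)^(m - T.card), by simp only [eq_intCast]; push_cast; ring⟩
    have hsplit : (∏ x, B (σ x) x) * (M:ℚ)^m
        = ((∏ x ∈ T, (B (σ x) x * (M:ℚ))) * ∏ x ∈ Tᶜ, B (σ x) x) * (M:ℚ)^(m - T.card) := by
      rw [← Finset.prod_mul_prod_compl T (fun x => B (σ x) x)]
      rw [Finset.prod_mul_distrib, Finset.prod_const]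
      rw [show (M:ℚ)^m = (M:ℚ)^T.card * (M:ℚ)^(m - T.card) by
        rw [← pow_add, Nat.add_sub_cancel' hTm]]
      ring
    rw [mul_assoc, hsplit]
    apply Subring.mul_mem
    · exact ⟨Equiv.Perm.sign σ, by simp only [eq_intCast]⟩
    · apply Subring.mul_mem
      · apply Subring.mul_mem
        · exact Subring.prod_mem R hfac1
        · exact Subring.prod_mem R hfac2
      · exact hMmem
  -- d does not vanish
  set i₀ : Fin n := ⟨0, hn⟩ with hi₀
  have hdne : d i₀ ≠ 0 := by
    intro h0
    have hdet0 : (A.updateRow i₀ (Pi.single i₀ 1)).det = 0 := by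
      rw [← hdform i₀]; exact h0
    obtain ⟨v, hvne, hv⟩ := Matrix.exists_mulVec_eq_zero_iff.mpr hdet0
    set B := A.updateRow i₀ (Pi.single i₀ 1) with hB
    have hvi0 : v i₀ = 0 := by
      have h := congrFun hv i₀
      simp only [Matrix.mulVec, dotProduct, Pi.zero_apply] at h
      have he : ∀ c, B i₀ c * v c = if c = i₀ then v c else 0 := by
        intro c
        have h1 : B i₀ c = if c = i₀ then 1 else 0 := by
          rw [hB, Matrix.updateRow_self, Pi.single_apply]
        rw [h1]
        split <;> ring
      rw [Finset.sum_congr rfl fun c _ => he c,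
        Finset.sum_ite_eq' Finset.univ i₀ v] at h
      simpa using h
    have hvstat' : ∀ r, r ≠ i₀ → ∑ c, v c * P c r = v r := by
      intro r hr
      have h := congrFun hv r
      simp only [Matrix.mulVec, dotProduct, Pi.zero_apply] at h
      have he : ∀ c, B r c * v c = (if c = r then v c else 0) - P c r * v c := by
        intro c
        have h1 : B r c = A r c := by rw [hB]; rw [Matrix.updateRow_ne hr]
        rw [h1, hAapp]
        by_cases hc : c = r
        · subst hc; simp only [if_pos rfl, if_true, eq_self_iff_true]; ring
        · simp only [if_neg hc, if_neg (Ne.symm hc)]; ring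
      rw [Finset.sum_congr rfl fun c _ => he c, Finset.sum_sub_distrib,
        Finset.sum_ite_eq' Finset.univ r v] at h
      simp only [Finset.mem_univ, if_true] at h
      have hcomm : ∑ c, v c * P c r = ∑ c, P c r * v c :=
        Finset.sum_congr rfl fun c _ => mul_comm _ _
      rw [hcomm]; linarith
    have ht : ∀ r, ∑ c, v c * P c r = v r := by
      have hsumall : ∑ r, ∑ c, v c * P c r = ∑ c, v c := by
        rw [Finset.sum_comm]
        calc ∑ c, ∑ r, v c * P c r = ∑ c, v c * ∑ r, P c r :=
              Finset.sum_congr rfl fun c _ => (Finset.mul_sum _ _ _).symm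
          _ = ∑ c, v c := by
              refine Finset.sum_congr rfl fun c _ => ?_
              rw [hPsum c, mul_one]
      have hsplit : ∑ r, ∑ c, v c * P c r
          = (∑ c, v c * P c i₀) + ∑ r ∈ Finset.univ.erase i₀, ∑ c, v c * P c r :=
        (Finset.add_sum_erase _ _ (Finset.mem_univ i₀)).symm
      have h2 : ∑ r ∈ Finset.univ.erase i₀, ∑ c, v c * P c r
          = ∑ r ∈ Finset.univ.erase i₀, v r :=
        Finset.sum_congr rfl fun r hr => hvstat' r (Finset.mem_erase.mp hr).1
      have h3 : v i₀ + ∑ r ∈ Finset.univ.erase i₀, v r = ∑ r, v r :=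
        Finset.add_sum_erase _ _ (Finset.mem_univ i₀)
      have hti0 : ∑ c, v c * P c i₀ = v i₀ := by
        rw [hsplit, h2] at hsumall
        linarith
      intro r
      by_cases hr : r = i₀
      · subst hr; exact hti0
      · exact hvstat' r hr
    have huniq := uniq P hn hPnn hirr π hπnn hπsum hπstat v ht
    have hc0 : (∑ c, v c) = 0 := by
      have hq := huniq i₀
      rw [hvi0] at hq
      have hπpos := pipos P hPnn hirr π hπnn hπsum hπstat i₀
      rcases mul_eq_zero.mp hq.symm with h | h
      · exact h
      · exact absurd h (ne_of_gt hπpos)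
    apply hvne
    funext j
    have hq := huniq j
    rw [hc0, zero_mul] at hq
    exact hq
  -- assemble
  choose z hz using hdint
  have hM0 : (0:ℚ) < (M:ℚ) := by exact_mod_cast Nat.lt_of_lt_of_le Nat.zero_lt_one hM
  have hMq : (0:ℚ) < (M:ℚ)^m := pow_pos hM0 m
  have hznn : ∀ i, (0:ℤ) ≤ z i := by
    intro i
    have : (0:ℚ) ≤ (z i : ℚ) := by
      rw [hz i]; exact mul_nonneg (hdbound i).1 hMq.le
    exact_mod_cast this
  have hzle : ∀ i, z i ≤ (M:ℤ)^m := by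
    intro i
    have : (z i : ℚ) ≤ (M:ℚ)^m := by
      rw [hz i]
      exact mul_le_of_le_one_left hMq.le (hdbound i).2
    exact_mod_cast this
  set Z : ℤ := ∑ i, z i with hZ
  have hZq : (Z:ℚ) = (∑ i, d i) * (M:ℚ)^m := by
    rw [hZ]
    push_cast
    rw [Finset.sum_mul]
    exact Finset.sum_congr rfl fun i _ => hz i
  have hdsumpos : (0:ℚ) < ∑ i, d i := by
    have h1 : 0 < d i₀ := lt_of_le_of_ne (hdbound i₀).1 (Ne.symm hdne)
    have h2 : d i₀ ≤ ∑ i, d i :=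
      Finset.single_le_sum (fun i _ => (hdbound i).1) (Finset.mem_univ i₀)
    linarith
  have hZpos : 0 < Z := by
    have : (0:ℚ) < (Z:ℚ) := by rw [hZq]; exact mul_pos hdsumpos hMq
    exact_mod_cast this
  have hZne : ((Z:ℤ):ℚ) ≠ 0 := by
    have := hZpos
    positivity
  have hπeq : ∀ j, π j = (z j : ℚ) / (Z:ℚ) := by
    set x : Fin n → ℚ := fun j => (z j:ℚ)/(Z:ℚ) with hx
    have hxstat : ∀ j, ∑ i', x i' * P i' j = x j := by
      intro j
      have hnum : ∑ i', (z i' : ℚ) * P i' j = (z j : ℚ) := by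
        calc ∑ i', (z i' : ℚ) * P i' j = ∑ i', (d i' * P i' j) * (M:ℚ)^m := by
              refine Finset.sum_congr rfl fun i' _ => ?_
              rw [hz i']; ring
          _ = (∑ i', d i' * P i' j) * (M:ℚ)^m := (Finset.sum_mul _ _ _).symm
          _ = d j * (M:ℚ)^m := by rw [hdstat j]
          _ = (z j : ℚ) := (hz j).symm
      calc ∑ i', x i' * P i' j = (∑ i', (z i':ℚ) * P i' j) / (Z:ℚ) := by
            rw [Finset.sum_div]
            exact Finset.sum_congr rfl fun i' _ => by rw [hx]; ring
        _ = x j := by rw [hnum, hx]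
    have hxsum : ∑ j, x j = 1 := by
      rw [hx]
      simp only
      rw [← Finset.sum_div]
      have hzz : ∑ j, (z j:ℚ) = (Z:ℚ) := by rw [hZ]; push_cast; rfl
      rw [hzz, div_self hZne]
    have huniq := uniq P hn hPnn hirr π hπnn hπsum hπstat x hxstat
    intro j
    have hq := huniq j
    rw [hxsum, one_mul] at hq
    exact hq.symm
  have hdvdnat : ∀ j, (π j).den ∣ Z.toNat := by
    intro j
    have h1 : π j = Rat.divInt (z j) Z := by rw [Rat.divInt_eq_div, hπeq j]
    have h2 : ((π j).den : ℤ) ∣ Z := by rw [h1]; exact Rat.den_dvd _ _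
    rwa [← Int.toNat_of_nonneg hZpos.le, Int.natCast_dvd_natCast] at h2
  have hlcm : Finset.univ.lcm (fun j => (π j).den) ∣ Z.toNat :=
    Finset.lcm_dvd fun j _ => hdvdnat j
  have hZle : Z ≤ (n:ℤ) * (M:ℤ)^m := by
    calc Z = ∑ i', z i' := hZ
      _ ≤ ∑ _i' : Fin n, (M:ℤ)^m := Finset.sum_le_sum fun i' _ => hzle i'
      _ = n * (M:ℤ)^m := by
          rw [Finset.sum_const, Finset.card_univ, Fintype.card_fin, nsmul_eq_mul]
  have hfin : Z.toNat ≤ n * M^m := by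
    apply Int.toNat_le.mpr
    have h1 : ((n * M^m : ℕ):ℤ) = (n:ℤ) * (M:ℤ)^m := by push_cast; ring
    rw [h1]
    exact hZle
  exact le_trans (Nat.le_of_dvd (by omega) hlcm) hfin
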